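/- Let θ ∈ [μ, θ0] be a Lipschitz constant of the extended pseudo-gradient 𝐅, let λ2 > 0 satisfy ⟨v, (I_{Nn} − 𝐖)v⟩ ≥ λ2‖v‖² for all v ∈ ℝ^{Nn} orthogonal to the consensus subspace E_n, and define α_max := 4μλ2 / ((θ0+θ)² + 4μθ) and M := α·[[μ/N, −(θ0+θ)/(2√N)], [−(θ0+θ)/(2√N), λ2/α − θ]]. Then for any α ∈ (0, α_max): the matrix M is positive definite, and for every ρ_α > 0 such that ⟨Mv, v⟩ ≥ ρ_α‖v‖² for all v ∈ ℝ² (in particular ρ_α = λ_min(M)), the mapping F_a is ρ_α-restricted strongly monotone with respect to E_n: ⟨𝐱 − 𝐲, F_a(𝐱) − F_a(𝐲)⟩ ≥ ρ_α‖𝐱 − 𝐲‖² for all 𝐱 ∈ ℝ^{Nn} and all 𝐲 ∈ E_n. -/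

import Mathlib

open scoped InnerProductSpace Matrix

/-- The strategy-profile space `ℝ^n = ℝ^{n_1} × ⋯ × ℝ^{n_N}`, with the Euclidean (ℓ²)
structure. Block `i` is agent `i`'s strategy space `ℝ^{n_i}`. -/
abbrev Prof (N : ℕ) (d : Fin N → ℕ) : Type :=
  PiLp 2 (fun i : Fin N => EuclideanSpace ℝ (Fin (d i)))

/-- The stacked space `ℝ^{Nn}` of all agents' estimates; block `i` is agent `i`'s estimate
`𝐱_i ∈ ℝ^n` of the full strategy profile. -/
abbrev Est (N : ℕ) (d : Fin N → ℕ) : Type :=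
  PiLp 2 (fun _ : Fin N => Prof N d)

/-- The pseudo-gradient `F(x) := col(∇_{x_i} J_i(x_i, x_{−i}))_i`, built from the partial
gradients `G i`. -/
noncomputable def pseudoGrad {N : ℕ} {d : Fin N → ℕ}
    (G : ∀ i : Fin N, Prof N d → EuclideanSpace ℝ (Fin (d i)))
    (x : Prof N d) : Prof N d :=
  WithLp.toLp 2 (fun i => G i x)

/-- The extended pseudo-gradient `𝐅(𝐱) := col(∇_{x_i} J_i(𝐱_{i,i}, 𝐱_{i,−i}))_i`. -/
noncomputable def extPseudoGrad {N : ℕ} {d : Fin N → ℕ}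
    (G : ∀ i : Fin N, Prof N d → EuclideanSpace ℝ (Fin (d i)))
    (bx : Est N d) : Prof N d :=
  WithLp.toLp 2 (fun i => G i (bx i))

/-- `Rᵀ` places block `i` of `v ∈ ℝ^n` in the `(i,i)`-block position of `ℝ^{Nn}`,
with zeros elsewhere. -/
noncomputable def RT {N : ℕ} {d : Fin N → ℕ} (v : Prof N d) : Est N d :=
  WithLp.toLp 2 (fun i => WithLp.toLp 2 (Function.update (0 : Prof N d) i (v i)))

/-- `𝐖 = W ⊗ I_n` acting blockwise: `(𝐖𝐱)_i = Σ_j w_{ij} 𝐱_j`. -/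
noncomputable def Wact {N : ℕ} {d : Fin N → ℕ} (W : Matrix (Fin N) (Fin N) ℝ) (bx : Est N d) : Est N d :=
  WithLp.toLp 2 (fun i => ∑ j, W i j • bx j)

/-- `F_a(𝐱) := α Rᵀ𝐅(𝐱) + (I_{Nn} − 𝐖)𝐱`. -/
noncomputable def Fa {N : ℕ} {d : Fin N → ℕ} (α : ℝ)
    (G : ∀ i : Fin N, Prof N d → EuclideanSpace ℝ (Fin (d i)))
    (W : Matrix (Fin N) (Fin N) ℝ) (bx : Est N d) : Est N d :=
  α • RT (extPseudoGrad G bx) + (bx - Wact W bx)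

/-- `𝛀 := {𝐱 ∈ ℝ^{Nn} : 𝐱_{i,i} ∈ Ω_i for all i}`. -/
def bigOmega {N : ℕ} {d : Fin N → ℕ}
    (Ω : ∀ i : Fin N, Set (EuclideanSpace ℝ (Fin (d i)))) : Set (Est N d) :=
  {bx | ∀ i, bx i i ∈ Ω i}

/-- Normal cone operator of a closed convex set `S` at `x`
(empty if `x ∉ S`). -/
def normalCone {E : Type*} [NormedAddCommGroup E] [InnerProductSpace ℝ E]
    (S : Set E) (x : E) : Set E :=
  {v | x ∈ S ∧ ∀ z ∈ S, ⟪v, z - x⟫_ℝ ≤ 0}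

/-- The consensus subspace `E_n := {𝟏_N ⊗ y : y ∈ ℝ^n} ⊆ ℝ^{Nn}`. -/
def consensus (N : ℕ) (d : Fin N → ℕ) : Set (Est N d) :=
  {bx | ∃ y : Prof N d, ∀ i, bx i = y}


section StmtHelpers
variable {N : ℕ} {d : Fin N → ℕ}

lemma inner_est' (x y : Est N d) : ⟪x, y⟫_ℝ = ∑ i, ⟪x i, y i⟫_ℝ := PiLp.inner_apply x y
lemma inner_prof' (x y : Prof N d) : ⟪x, y⟫_ℝ = ∑ i, ⟪x i, y i⟫_ℝ := PiLp.inner_apply x y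

lemma norm_est_sq' (x : Est N d) : ‖x‖ ^ 2 = ∑ i, ‖x i‖ ^ 2 := by
  rw [← real_inner_self_eq_norm_sq, inner_est']
  exact Finset.sum_congr rfl fun i _ => real_inner_self_eq_norm_sq _

lemma norm_prof_sq' (x : Prof N d) : ‖x‖ ^ 2 = ∑ i, ‖x i‖ ^ 2 := by
  rw [← real_inner_self_eq_norm_sq, inner_prof']
  exact Finset.sum_congr rfl fun i _ => real_inner_self_eq_norm_sq _

/-- `R` extracts the diagonal blocks. -/
noncomputable def Rop (v : Est N d) : Prof N d := WithLp.toLp 2 (fun i => v i i)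

/-- consensus embedding -/
noncomputable def consE (z : Prof N d) : Est N d := WithLp.toLp 2 (fun _ => z)

lemma Rop_consE (z : Prof N d) : Rop (consE z : Est N d) = z := rfl

lemma Rop_add (a b : Est N d) : Rop (a + b) = Rop a + Rop b := rfl

lemma consE_add (a b : Prof N d) : (consE (a + b) : Est N d) = consE a + consE b := rfl

lemma extPseudoGrad_consE (G : ∀ i : Fin N, Prof N d → EuclideanSpace ℝ (Fin (d i)))
    (z : Prof N d) : extPseudoGrad G (consE z) = pseudoGrad G z := rfl

lemma RT_sub (a b : Prof N d) : RT (a - b) = RT a - RT b := by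
  refine PiLp.ext fun i => PiLp.ext fun j => ?_
  by_cases h : j = i
  · subst h; simp [RT]
  · simp [RT, Function.update_of_ne h]

lemma inner_RT (v : Est N d) (w : Prof N d) : ⟪v, RT w⟫_ℝ = ⟪Rop v, w⟫_ℝ := by
  rw [inner_est', inner_prof']
  refine Finset.sum_congr rfl fun i _ => ?_
  rw [inner_prof']
  rw [Finset.sum_eq_single i]
  · simp [RT, Rop]
  · intro j _ hj
    simp [RT, Function.update_of_ne hj]
  · simp

lemma norm_Rop_le (v : Est N d) : ‖Rop v‖ ≤ ‖v‖ := by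
  have h2 : ‖Rop v‖ ^ 2 ≤ ‖v‖ ^ 2 := by
    rw [norm_prof_sq', norm_est_sq']
    refine Finset.sum_le_sum fun i _ => ?_
    rw [norm_prof_sq']
    exact Finset.single_le_sum (f := fun j => ‖v i j‖ ^ 2)
      (fun j _ => by positivity) (Finset.mem_univ i)
  nlinarith [norm_nonneg (Rop v), norm_nonneg v]

lemma Wact_sub (W : Matrix (Fin N) (Fin N) ℝ) (a b : Est N d) :
    Wact W (a - b) = Wact W a - Wact W b := by
  refine PiLp.ext fun i => ?_
  simp [Wact, smul_sub, Finset.sum_sub_distrib]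

lemma Wact_consE (W : Matrix (Fin N) (Fin N) ℝ) (hst : ∀ i, ∑ j, W i j = 1)
    (z : Prof N d) : Wact W (consE z : Est N d) = consE z := by
  refine PiLp.ext fun i => ?_
  simp [Wact, consE, ← Finset.sum_smul, hst i]

lemma Wact_symm (W : Matrix (Fin N) (Fin N) ℝ) (hs : W.IsSymm) (u w : Est N d) :
    ⟪u, Wact W w⟫_ℝ = ⟪Wact W u, w⟫_ℝ := by
  rw [inner_est', inner_est']
  simp only [Wact, inner_sum, sum_inner, real_inner_smul_right, real_inner_smul_left]
  rw [Finset.sum_comm]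
  refine Finset.sum_congr rfl fun i _ => Finset.sum_congr rfl fun j _ => ?_
  rw [show W j i = W i j from (congrFun (congrFun hs.eq j) i) ▸ rfl]

lemma dot_self_fin2 (a b : ℝ) : (![a,b] : Fin 2 → ℝ) ⬝ᵥ ![a,b] = a^2 + b^2 := by
  simp [dotProduct, Fin.sum_univ_two]; ring

lemma Mdot_fin2 (α p q r a b : ℝ) :
    ((α • !![p, q; q, r]).mulVec ![a, b]) ⬝ᵥ ![a, b] = α * (p*a^2 + 2*q*a*b + r*b^2) := by
  simp [Matrix.mulVec, dotProduct, Fin.sum_univ_two]; ring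

end StmtHelpers

set_option maxHeartbeats 1000000 in
/-- Lemma 4 of the paper, \cite[Lem. 3]{Pavel2018}. Let `θ ∈ [μ, θ0]` be a
Lipschitz constant of `𝐅`, let `lam2 > 0` be a spectral-gap constant of `I − 𝐖` on the
orthogonal complement of the consensus subspace, and let
`α_max := 4μlam2/((θ0+θ)² + 4μθ)`. Then for any `α ∈ (0, α_max)` the matrix
`M = α[[μ/N, −(θ0+θ)/(2√N)], [−(θ0+θ)/(2√N), lam2/α − θ]]` is positive definite and, for
every `ρ_α > 0` with `M ⪰ ρ_α I`, the mapping `F_a` is `ρ_α`-restricted strongly monotone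
with respect to the consensus subspace `E_n`. -/
theorem stmt8 {N : ℕ} {d : Fin N → ℕ} (hN : 0 < N)
    (J : ∀ _ : Fin N, Prof N d → ℝ)
    (hJconv : ∀ i (x : Prof N d),
      ConvexOn ℝ Set.univ (fun y => J i (WithLp.toLp 2 (Function.update x i y))))
    (G : ∀ i : Fin N, Prof N d → EuclideanSpace ℝ (Fin (d i)))
    (hGgrad : ∀ i (x : Prof N d),
      HasGradientAt (fun y => J i (WithLp.toLp 2 (Function.update x i y))) (G i x) (x i))
    (μ θ0 : ℝ) (hμ : 0 < μ) (hθ0 : 0 < θ0)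
    (hFmon : ∀ x y : Prof N d,
      ⟪x - y, pseudoGrad G x - pseudoGrad G y⟫_ℝ ≥ μ * ‖x - y‖ ^ 2)
    (hFlip : ∀ x y : Prof N d, ‖pseudoGrad G x - pseudoGrad G y‖ ≤ θ0 * ‖x - y‖)
    (W : Matrix (Fin N) (Fin N) ℝ)
    (hWsymm : W.IsSymm) (hWnonneg : ∀ i j, 0 ≤ W i j)
    (hWstoch : ∀ i, ∑ j, W i j = 1) (hWdiag : ∀ i, 0 < W i i)
    -- θ is a Lipschitz constant of the extended pseudo-gradient 𝐅, with θ ∈ [μ, θ0]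
    (θ : ℝ) (hθl : μ ≤ θ) (hθu : θ ≤ θ0)
    (hextLip : ∀ bx by_ : Est N d,
      ‖extPseudoGrad G bx - extPseudoGrad G by_‖ ≤ θ * ‖bx - by_‖)
    -- lam2 is a spectral-gap constant of I − 𝐖 orthogonally to the consensus subspace
    (lam2 : ℝ) (hlam2 : 0 < lam2)
    (hgap : ∀ v : Est N d, (∀ u ∈ consensus N d, ⟪v, u⟫_ℝ = 0) →
      ⟪v, v - Wact W v⟫_ℝ ≥ lam2 * ‖v‖ ^ 2)
    (α : ℝ) (hα0 : 0 < α)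
    (hαmax : α < 4 * μ * lam2 / ((θ0 + θ) ^ 2 + 4 * μ * θ)) :
    -- conclusion: M ≻ 0, and F_a is ρ_α-restricted strongly monotone w.r.t. E_n
    (α • !![μ / (N : ℝ), -(θ0 + θ) / (2 * Real.sqrt (N : ℝ));
        -(θ0 + θ) / (2 * Real.sqrt (N : ℝ)), lam2 / α - θ]).PosDef ∧
    ∀ ρα : ℝ, 0 < ρα →
      (∀ v : Fin 2 → ℝ,
        (α • !![μ / (N : ℝ), -(θ0 + θ) / (2 * Real.sqrt (N : ℝ));
          -(θ0 + θ) / (2 * Real.sqrt (N : ℝ)), lam2 / α - θ]).mulVec v ⬝ᵥ v ≥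
          ρα * (v ⬝ᵥ v)) →
      ∀ bx : Est N d, ∀ by_ ∈ consensus N d,
        ⟪bx - by_, Fa α G W bx - Fa α G W by_⟫_ℝ ≥ ρα * ‖bx - by_‖ ^ 2 := by
  -- basic constants
  have hNR : (0:ℝ) < (N:ℝ) := by exact_mod_cast hN
  have hNne : ((N:ℝ)) ≠ 0 := ne_of_gt hNR
  set sN : ℝ := Real.sqrt (N:ℝ) with hsNdef
  have hsN : 0 < sN := Real.sqrt_pos.mpr hNR
  have hsN2 : sN ^ 2 = (N:ℝ) := Real.sq_sqrt (le_of_lt hNR)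
  have hθ : 0 < θ := lt_of_lt_of_le hμ hθl
  have hD : (0:ℝ) < (θ0 + θ) ^ 2 + 4 * μ * θ := by positivity
  have hkey : α * ((θ0 + θ) ^ 2 + 4 * μ * θ) < 4 * μ * lam2 := by
    have := (lt_div_iff₀ hD).mp hαmax
    linarith
  have hlmθ : 0 < lam2 - α * θ := by nlinarith [sq_nonneg (θ0 + θ)]
  have hαne : α ≠ 0 := ne_of_gt hα0
  constructor
  · -- Positive definiteness of M
    rw [Matrix.posDef_iff_dotProduct_mulVec]
    constructor
    · show _ᴴ = _
      ext i j
      fin_cases i <;> fin_cases j <;>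
        simp [Matrix.conjTranspose_apply]
    · intro x hx
      have hab : x 0 ≠ 0 ∨ x 1 ≠ 0 := by
        by_contra h
        push_neg at h
        exact hx (funext fun i => by fin_cases i <;> simp [h.1, h.2])
      have hpos : 0 < x 0 ^ 2 + x 1 ^ 2 := by
        rcases hab with h | h
        · have := lt_of_le_of_ne (sq_nonneg (x 0)) (Ne.symm (pow_ne_zero 2 h))
          nlinarith [sq_nonneg (x 1)]
        · have := lt_of_le_of_ne (sq_nonneg (x 1)) (Ne.symm (pow_ne_zero 2 h))
          nlinarith [sq_nonneg (x 0)]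
      have hxeta : x = ![x 0, x 1] := funext fun i => by fin_cases i <;> rfl
      have hstar : star x ⬝ᵥ ((α • !![μ / (N : ℝ), -(θ0 + θ) / (2 * sN);
          -(θ0 + θ) / (2 * sN), lam2 / α - θ]) *ᵥ x)
          = α * ((μ / (N:ℝ)) * (x 0)^2 + 2 * (-(θ0 + θ) / (2 * sN)) * (x 0) * (x 1)
              + (lam2 / α - θ) * (x 1)^2) := by
        conv_lhs => rw [hxeta]
        rw [show star (![x 0, x 1] : Fin 2 → ℝ) = ![x 0, x 1] from rfl]
        simp [Matrix.mulVec, dotProduct, Fin.sum_univ_two]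
        ring
      rw [hstar]
      have hsNne : sN ≠ 0 := ne_of_gt hsN
      have hc : 0 < 4 * μ * (lam2 - α * θ) - α * (θ0 + θ)^2 := by nlinarith
      have hA : 0 < α * (2*μ*(x 0) - sN*(θ0+θ)*(x 1))^2
          + sN^2 * (4*μ*(lam2 - α*θ) - α*(θ0+θ)^2) * (x 1)^2 := by
        by_cases hb : x 1 = 0
        · have ha : x 0 ≠ 0 := by
            rcases hab with h | h
            · exact h
            · exact absurd hb h
          have ha2 : 0 < (x 0)^2 :=
            lt_of_le_of_ne (sq_nonneg (x 0)) (Ne.symm (pow_ne_zero 2 ha))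
          rw [hb]
          ring_nf
          nlinarith [mul_pos (mul_pos (mul_pos hα0 hμ) hμ) ha2]
        · have hb2 : 0 < (x 1)^2 :=
            lt_of_le_of_ne (sq_nonneg (x 1)) (Ne.symm (pow_ne_zero 2 hb))
          nlinarith [mul_nonneg hα0.le (sq_nonneg (2*μ*(x 0) - sN*(θ0+θ)*(x 1))),
            mul_pos (mul_pos (pow_pos hsN 2) hc) hb2]
      have hiden : α * ((μ / (N:ℝ)) * (x 0)^2 + 2 * (-(θ0 + θ) / (2 * sN)) * (x 0) * (x 1)
            + (lam2 / α - θ) * (x 1)^2) * (4 * μ * sN^2)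
          = α * (2*μ*(x 0) - sN*(θ0+θ)*(x 1))^2
            + sN^2 * (4*μ*(lam2 - α*θ) - α*(θ0+θ)^2) * (x 1)^2 := by
        rw [show ((N:ℝ)) = sN^2 from hsN2.symm]
        field_simp
        ring
      have hc4 : 0 < 4 * μ * sN^2 := by positivity
      nlinarith [hA, hiden, hc4]
  · -- restricted strong monotonicity
    intro ρα hρα hQ bx by_ hby
    obtain ⟨y₀, hy₀⟩ := hby
    have hbyE : by_ = consE y₀ := PiLp.ext hy₀
    set v : Est N d := bx - by_ with hvdef
    set z : Prof N d := (N:ℝ)⁻¹ • ∑ i, v i with hzdef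
    set vpar : Est N d := consE z with hvpardef
    set vperp : Est N d := v - vpar with hvperpdef
    set Δ : Prof N d := extPseudoGrad G bx - extPseudoGrad G by_ with hΔdef
    set mid : Est N d := consE (y₀ + z) with hmiddef
    -- definitional facts, recorded before making the let-variables opaque
    have hvperpi : ∀ i, vperp i = v i - z := fun _ => rfl
    have hvpari : ∀ i : Fin N, vpar i = z := fun _ => rfl
    have hzinner : ∀ y : Prof N d, ⟪z, y⟫_ℝ = (N:ℝ)⁻¹ * ⟪∑ i, v i, y⟫_ℝ :=
      fun y => real_inner_smul_left _ _ _
    have hRv : Rop v = z + Rop vperp := by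
      refine PiLp.ext fun i => ?_
      show v i i = z i + vperp i i
      rw [hvperpi i]
      show v i i = z i + (v i i - z i)
      abel
    have hmidval : extPseudoGrad G mid = pseudoGrad G (y₀ + z) := rfl
    have hbyval : extPseudoGrad G by_ = pseudoGrad G y₀ := by
      rw [hbyE]; exact extPseudoGrad_consE G y₀
    have hWvperp : Wact W vperp = Wact W v - Wact W vpar := Wact_sub W v vpar
    have h2 : Wact W vpar = vpar := Wact_consE W hWstoch z
    have hmid : bx - mid = vperp := by
      refine PiLp.ext fun i => ?_
      show bx i - (y₀ + z) = vperp i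
      rw [hvperpi i, show v i = bx i - by_ i from rfl, hy₀ i]
      abel
    clear_value v z vpar vperp Δ mid
    have hv : v = vpar + vperp := by rw [hvperpdef]; abel
    -- orthogonality to the consensus subspace
    have hperp : ∀ y : Prof N d, ⟪vperp, (consE y : Est N d)⟫_ℝ = 0 := by
      intro y
      rw [inner_est']
      have hterm : ∑ i, ⟪vperp i, (consE y : Est N d) i⟫_ℝ
          = ∑ i : Fin N, (⟪v i, y⟫_ℝ - ⟪z, y⟫_ℝ) :=
        Finset.sum_congr rfl fun i _ => by
          rw [hvperpi i, inner_sub_left]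
          rfl
      rw [hterm, Finset.sum_sub_distrib, ← sum_inner, Finset.sum_const,
        Finset.card_univ, Fintype.card_fin]
      rw [hzinner y, nsmul_eq_mul, ← mul_assoc, mul_inv_cancel₀ hNne, one_mul, sub_self]
    have hperpU : ∀ u ∈ consensus N d, ⟪vperp, u⟫_ℝ = 0 := by
      rintro u ⟨y, hy⟩
      rw [show u = consE y from PiLp.ext hy]
      exact hperp y
    have horth : ⟪vpar, vperp⟫_ℝ = 0 := by
      rw [hvpardef, real_inner_comm]
      exact hperp z
    have hsplit : ‖v‖^2 = ‖vpar‖^2 + ‖vperp‖^2 := by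
      rw [hv, norm_add_sq_real, horth]; ring
    have hnormpar : ‖vpar‖^2 = (N:ℝ) * ‖z‖^2 := by
      rw [norm_est_sq']
      have he : ∀ i : Fin N, ‖vpar i‖^2 = ‖z‖^2 := fun i => by rw [hvpari i]
      simp only [he, Finset.sum_const, Finset.card_univ, Fintype.card_fin, nsmul_eq_mul]
    -- spectral-gap estimate
    have hWv : v - Wact W v = vperp - Wact W vperp := by
      rw [hWvperp, h2, hvperpdef]
      abel
    have hgapv : ⟪v, v - Wact W v⟫_ℝ ≥ lam2 * ‖vperp‖^2 := by
      have h0 : ⟪vpar, vperp - Wact W vperp⟫_ℝ = 0 := by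
        rw [inner_sub_right, Wact_symm W hWsymm, h2, horth, sub_self]
      have hsum : ⟪v, v - Wact W v⟫_ℝ = ⟪vperp, vperp - Wact W vperp⟫_ℝ := by
        rw [hWv]
        conv_lhs => rw [hv]
        rw [inner_add_left, h0, zero_add]
      rw [hsum]
      exact hgap vperp hperpU
    -- pseudo-gradient decomposition
    have hWsub : Wact W v = Wact W bx - Wact W by_ := by
      rw [hvdef]; exact Wact_sub W bx by_
    have hFa : Fa α G W bx - Fa α G W by_ = α • RT Δ + (v - Wact W v) := by
      rw [hΔdef, RT_sub, smul_sub, hWsub, hvdef]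
      simp only [Fa]
      abel
    have hinner : ⟪v, Fa α G W bx - Fa α G W by_⟫_ℝ
        = α * ⟪Rop v, Δ⟫_ℝ + ⟪v, v - Wact W v⟫_ℝ := by
      rw [hFa, inner_add_right, real_inner_smul_right, inner_RT]
    have hw1 : ‖extPseudoGrad G bx - extPseudoGrad G mid‖ ≤ θ * ‖vperp‖ := by
      have h := hextLip bx mid
      rwa [hmid] at h
    have hw2 : ‖pseudoGrad G (y₀ + z) - pseudoGrad G y₀‖ ≤ θ0 * ‖z‖ := by
      have h := hFlip (y₀ + z) y₀
      rwa [add_sub_cancel_left] at h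
    have hmon : ⟪z, pseudoGrad G (y₀ + z) - pseudoGrad G y₀⟫_ℝ ≥ μ * ‖z‖^2 := by
      have h := hFmon (y₀ + z) y₀
      rwa [add_sub_cancel_left] at h
    have hΔsplit : Δ = (extPseudoGrad G bx - extPseudoGrad G mid)
        + (pseudoGrad G (y₀ + z) - pseudoGrad G y₀) := by
      rw [hΔdef, ← hmidval, ← hbyval]
      abel
    have hRΔ : ⟪Rop v, Δ⟫_ℝ
        = ⟪z, pseudoGrad G (y₀ + z) - pseudoGrad G y₀⟫_ℝ
          + ⟪z, extPseudoGrad G bx - extPseudoGrad G mid⟫_ℝ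
          + ⟪Rop vperp, extPseudoGrad G bx - extPseudoGrad G mid⟫_ℝ
          + ⟪Rop vperp, pseudoGrad G (y₀ + z) - pseudoGrad G y₀⟫_ℝ := by
      rw [hΔsplit, hRv, inner_add_left, inner_add_right, inner_add_right]
      ring
    have hnRperp : ‖Rop vperp‖ ≤ ‖vperp‖ := norm_Rop_le vperp
    have b1 : ⟪z, extPseudoGrad G bx - extPseudoGrad G mid⟫_ℝ ≥ -(θ * ‖z‖ * ‖vperp‖) := by
      have h1 := (abs_le.mp (abs_real_inner_le_norm z (extPseudoGrad G bx - extPseudoGrad G mid))).1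
      have h2' := mul_le_mul_of_nonneg_left hw1 (norm_nonneg z)
      linarith
    have b2 : ⟪Rop vperp, extPseudoGrad G bx - extPseudoGrad G mid⟫_ℝ
        ≥ -(θ * ‖vperp‖ * ‖vperp‖) := by
      have h1 := (abs_le.mp (abs_real_inner_le_norm (Rop vperp)
        (extPseudoGrad G bx - extPseudoGrad G mid))).1
      have h2' := mul_le_mul hnRperp hw1 (norm_nonneg _) (norm_nonneg vperp)
      linarith
    have b3 : ⟪Rop vperp, pseudoGrad G (y₀ + z) - pseudoGrad G y₀⟫_ℝ
        ≥ -(θ0 * ‖z‖ * ‖vperp‖) := by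
      have h1 := (abs_le.mp (abs_real_inner_le_norm (Rop vperp)
        (pseudoGrad G (y₀ + z) - pseudoGrad G y₀))).1
      have h2' := mul_le_mul hnRperp hw2 (norm_nonneg _) (norm_nonneg vperp)
      linarith
    have hRΔ_ge : ⟪Rop v, Δ⟫_ℝ
        ≥ μ * ‖z‖^2 - (θ0 + θ) * ‖z‖ * ‖vperp‖ - θ * ‖vperp‖^2 := by
      rw [hRΔ]
      nlinarith [hmon, b1, b2, b3, sq_nonneg (0:ℝ)]
    -- assemble via the quadratic-form hypothesis
    have hP : ‖vpar‖ = sN * ‖z‖ := by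
      have h1 : ‖vpar‖^2 = (sN * ‖z‖)^2 := by
        rw [hnormpar, mul_pow, hsN2]
      calc ‖vpar‖ = Real.sqrt (‖vpar‖^2) := (Real.sqrt_sq (norm_nonneg _)).symm
        _ = Real.sqrt ((sN * ‖z‖)^2) := by rw [h1]
        _ = sN * ‖z‖ := Real.sqrt_sq (by positivity)
    have hQ' := hQ ![‖vpar‖, ‖vperp‖]
    rw [Mdot_fin2, dot_self_fin2] at hQ'
    have hLHS : α * (μ/(N:ℝ) * ‖vpar‖^2 + 2*(-(θ0+θ)/(2*sN))*‖vpar‖*‖vperp‖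
          + (lam2/α - θ)*‖vperp‖^2)
        = α*μ*‖z‖^2 - α*(θ0+θ)*‖z‖*‖vperp‖ + (lam2 - α*θ)*‖vperp‖^2 := by
      rw [hP, show ((N:ℝ)) = sN^2 from hsN2.symm]
      have hsNne : sN ≠ 0 := ne_of_gt hsN
      field_simp
      ring
    rw [hLHS] at hQ'
    have hαRΔ : α * ⟪Rop v, Δ⟫_ℝ
        ≥ α*μ*‖z‖^2 - α*(θ0+θ)*‖z‖*‖vperp‖ - α*θ*‖vperp‖^2 := by
      linarith [mul_le_mul_of_nonneg_left hRΔ_ge hα0.le]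
    rw [hinner, hsplit]
    linarith [hαRΔ, hgapv, hQ']
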